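/- For every k-form φ with affine coefficients on the standard n-simplex whose pullbacks to all k-faces are constant, one has φ = W(Rφ), where R is the de Rham map; i.e., W∘R = id on Λᵏₑ. -/

import Mathlib

open MeasureTheory Finset

/-- A real-valued function on `ℝⁿ` is affine if it has the form `x ↦ ∑ aᵢ xⁱ + b`. -/
def IsAffineFn {n : ℕ} (f : (Fin n → ℝ) → ℝ) : Prop :=
  ∃ (a : Fin n → ℝ) (b : ℝ), ∀ x, f x = (∑ i, a i * x i) + b

/-- The standard `n`-simplex `{x : xⁱ ≥ 0, ∑ xⁱ ≤ 1}` in `ℝⁿ`. -/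
def stdSimp (n : ℕ) : Set (Fin n → ℝ) :=
  {x | (∀ i, 0 ≤ x i) ∧ (∑ i, x i) ≤ 1}

/-- The basic alternating `k`-form `dx^I` (for a strictly increasing multi-index given by a
`k`-element subset `I` of `{1,…,n}`) evaluated on `k` vectors. -/
def dxI {n k : ℕ} (I : {s : Finset (Fin n) // s.card = k}) (v : Fin k → Fin n → ℝ) : ℝ :=
  Matrix.det (Matrix.of fun i j => v j ((I.1.orderIsoOfFin I.2 i : Fin n)))

/-- The `k`-form `∑_I f_I dx^I` with coefficient functions `f_I`, evaluated at the point `x`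
on the `k` vectors `v`. -/
def formEval {n k : ℕ} (f : {s : Finset (Fin n) // s.card = k} → (Fin n → ℝ) → ℝ)
    (x : Fin n → ℝ) (v : Fin k → Fin n → ℝ) : ℝ :=
  ∑ I : {s : Finset (Fin n) // s.card = k}, f I x * dxI I v

/-- The vertices of the standard `n`-simplex: `p₀ = 0`, `pᵢ = eᵢ`. -/
def vert (n : ℕ) : Fin (n+1) → Fin n → ℝ :=
  Fin.cases 0 (fun j => Pi.single j 1)

/-- Affine parametrization of the `k`-face of the standard `n`-simplex with vertex set `S`
(vertices taken in increasing order), defined on the standard `k`-simplex. -/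
def facePt {n k : ℕ} (S : {s : Finset (Fin (n+1)) // s.card = k+1}) (y : Fin k → ℝ) :
    Fin n → ℝ :=
  vert n ((S.1.orderIsoOfFin S.2 0 : Fin (n+1))) +
    ∑ s : Fin k, y s • (vert n ((S.1.orderIsoOfFin S.2 s.succ : Fin (n+1))) -
      vert n ((S.1.orderIsoOfFin S.2 0 : Fin (n+1))))

/-- The differential of the face parametrization `facePt S`. -/
def faceDir {n k : ℕ} (S : {s : Finset (Fin (n+1)) // s.card = k+1}) (w : Fin k → ℝ) :
    Fin n → ℝ :=
  ∑ s : Fin k, w s • (vert n ((S.1.orderIsoOfFin S.2 s.succ : Fin (n+1))) -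
    vert n ((S.1.orderIsoOfFin S.2 0 : Fin (n+1))))

/-- Barycentric coordinates of the standard `n`-simplex: `ν₀ = 1 - ∑ xⁱ`, `νᵢ = xⁱ`. -/
def nu (n : ℕ) (j : Fin (n+1)) (x : Fin n → ℝ) : ℝ :=
  Fin.cases (1 - ∑ i, x i) (fun i => x i) j

/-- The differentials `dνⱼ` of the barycentric coordinates, as linear functionals. -/
def dnu (n : ℕ) (j : Fin (n+1)) (v : Fin n → ℝ) : ℝ :=
  Fin.cases (-(∑ i, v i)) (fun i => v i) j

/-- The Whitney form `W τ* = k! ∑ⱼ (-1)ʲ ν_{iⱼ} dν_{i₀} ∧ ⋯ ∧ (omit dν_{iⱼ}) ∧ ⋯ ∧ dν_{i_k}`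
of the dual cochain of the face with vertex set `S`, evaluated at `x` on the vectors `v`. -/
def whitneyFace {n k : ℕ} (S : {s : Finset (Fin (n+1)) // s.card = k+1})
    (x : Fin n → ℝ) (v : Fin k → Fin n → ℝ) : ℝ :=
  (Nat.factorial k : ℝ) * ∑ j : Fin (k+1), (-1 : ℝ) ^ (j : ℕ) *
    nu n ((S.1.orderIsoOfFin S.2 j : Fin (n+1))) x *
    Matrix.det (Matrix.of fun (t : Fin k) (m2 : Fin k) =>
      dnu n ((S.1.orderIsoOfFin S.2 (j.succAbove t) : Fin (n+1))) (v m2))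

/-- The Whitney map `W`, extended linearly to all real `k`-cochains. -/
def whitney {n k : ℕ} (c : {s : Finset (Fin (n+1)) // s.card = k+1} → ℝ)
    (x : Fin n → ℝ) (v : Fin k → Fin n → ℝ) : ℝ :=
  ∑ S, c S * whitneyFace S x v

/-- The integral of a `k`-form (given by its evaluation function `F`) over the `k`-face with
vertex set `S`, computed via the parametrization `facePt S`. -/
noncomputable def faceIntegral {n k : ℕ} (S : {s : Finset (Fin (n+1)) // s.card = k+1})
    (F : (Fin n → ℝ) → (Fin k → Fin n → ℝ) → ℝ) : ℝ :=
  ∫ y in stdSimp k, F (facePt S y) (fun s => faceDir S (Pi.single s 1))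

/-- A `k`-form (given by its evaluation function) pulls back to a constant form on every
`k`-face of the standard `n`-simplex. -/
def ConstOnFaces {n k : ℕ} (F : (Fin n → ℝ) → (Fin k → Fin n → ℝ) → ℝ) : Prop :=
  ∀ S : {s : Finset (Fin (n+1)) // s.card = k+1}, ∃ cst : ℝ,
    ∀ y ∈ stdSimp k, ∀ w : Fin k → Fin k → ℝ,
      F (facePt S y) (fun i => faceDir S (w i)) = cst * Matrix.det (Matrix.of fun i j => w j i)

namespace WR
open Pointwise
variable {n k : ℕ}

abbrev Idx (n k : ℕ) := {s : Finset (Fin n) // s.card = k}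

/-- increasing enumeration of `I`. -/
def en (I : Idx n k) (t : Fin k) : Fin n := I.1.orderEmbOfFin I.2 t

lemma en_mem (I : Idx n k) (t : Fin k) : en I t ∈ I.1 := Finset.orderEmbOfFin_mem _ _ _

lemma en_inj (I : Idx n k) : Function.Injective (en I) :=
  (I.1.orderEmbOfFin I.2).injective

lemma en_surj (I : Idx n k) {p : Fin n} (hp : p ∈ I.1) : ∃ t, en I t = p := by
  have : p ∈ Set.range (I.1.orderEmbOfFin I.2) := by
    rw [Finset.range_orderEmbOfFin]; exact hp
  exact this

/-- basis vectors attached to `I` -/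
def bI (I : Idx n k) : Fin k → Fin n → ℝ := fun t => Pi.single (en I t) 1

lemma dxI_def (I : Idx n k) (v : Fin k → Fin n → ℝ) :
    dxI I v = Matrix.det (Matrix.of fun i j => v j (en I i)) := rfl

lemma dxI_bI (I I' : Idx n k) : dxI I (bI I') = if I' = I then 1 else 0 := by
  rcases eq_or_ne I' I with h | h
  · subst h
    rw [if_pos rfl, dxI_def]
    have : (Matrix.of fun i j => bI I' j (en I' i)) = (1 : Matrix (Fin k) (Fin k) ℝ) := by
      ext i j
      simp only [Matrix.of_apply, bI, Pi.single_apply, Matrix.one_apply]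
      by_cases hij : i = j
      · simp [hij]
      · rw [if_neg (fun hc => hij (en_inj I' hc)), if_neg hij]
    rw [this, Matrix.det_one]
  · rw [if_neg h, dxI_def]
    have hne : ¬ I.1 ⊆ I'.1 := by
      intro hsub
      exact h (Subtype.ext ((Finset.eq_of_subset_of_card_le hsub
        (by rw [I.2, I'.2])).symm))
    obtain ⟨p, hpI, hpI'⟩ := Finset.not_subset.1 hne
    obtain ⟨i₀, hi₀⟩ := en_surj I hpI
    apply Matrix.det_eq_zero_of_row_eq_zero i₀
    intro j
    simp only [Matrix.of_apply, bI]
    rw [hi₀]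
    exact Pi.single_eq_of_ne (fun hc => hpI' (by rw [hc]; exact en_mem I' j)) 1


/-- `dxI I` as an alternating map. -/
noncomputable def dxIA (I : Idx n k) : (Fin n → ℝ) [⋀^Fin k]→ₗ[ℝ] ℝ :=
  (Matrix.detRowAlternating).compLinearMap (LinearMap.funLeft ℝ ℝ (en I))

lemma dxIA_apply (I : Idx n k) (v : Fin k → Fin n → ℝ) : dxIA I v = dxI I v := by
  rw [dxI_def, ← Matrix.det_transpose]
  rfl

lemma bijOn_en (w : Fin k → Fin n) (hw : Function.Injective w) :
    ∃ (I : Idx n k) (σ : Equiv.Perm (Fin k)), ∀ t, w t = en I (σ t) := by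
  classical
  have hcard : (Finset.univ.image w).card = k := by
    rw [Finset.card_image_of_injective _ hw, Finset.card_univ, Fintype.card_fin]
  set I : Idx n k := ⟨Finset.univ.image w, hcard⟩ with hI
  have hmem : ∀ t, w t ∈ I.1 := fun t => Finset.mem_image_of_mem w (Finset.mem_univ t)
  set e2f : Fin k → I.1 := fun t => ⟨w t, hmem t⟩ with he2f
  have hinj : Function.Injective e2f := fun a b hab => hw (congrArg Subtype.val hab)
  have hbij : Function.Bijective e2f := by
    rw [Fintype.bijective_iff_injective_and_card]
    refine ⟨hinj, ?_⟩
    simp only [Fintype.card_fin, Fintype.card_coe]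
    exact hcard.symm
  set e2 : Fin k ≃ I.1 := Equiv.ofBijective _ hbij with he2
  set e1 : Fin k ≃ I.1 := (I.1.orderIsoOfFin I.2).toEquiv with he1
  refine ⟨I, e2.trans e1.symm, fun t => ?_⟩
  have : en I (e1.symm (e2 t)) = ((e1 (e1.symm (e2 t))) : Fin n) := rfl
  rw [Equiv.trans_apply, this, Equiv.apply_symm_apply]
  rfl

lemma altsum_apply {α : Type*} (s : Finset α) (f : α → ((Fin n → ℝ) [⋀^Fin k]→ₗ[ℝ] ℝ))
    (u : Fin k → Fin n → ℝ) : (∑ a ∈ s, f a) u = ∑ a ∈ s, f a u := by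
  classical
  induction s using Finset.induction_on with
  | empty => simp
  | insert _ _ h ih =>
    rw [Finset.sum_insert h, Finset.sum_insert h, AlternatingMap.add_apply, ih]

/-- Expansion of an alternating map in the basic forms `dxI`. -/
lemma alt_expand (F : (Fin n → ℝ) [⋀^Fin k]→ₗ[ℝ] ℝ) (v : Fin k → Fin n → ℝ) :
    F v = ∑ I : Idx n k, F (bI I) * dxI I v := by
  classical
  set G : (Fin n → ℝ) [⋀^Fin k]→ₗ[ℝ] ℝ := ∑ I : Idx n k, F (bI I) • dxIA I with hG
  have hGapp : ∀ u, G u = ∑ I : Idx n k, F (bI I) * dxI I u := by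
    intro u
    rw [hG, altsum_apply]
    exact Finset.sum_congr rfl fun I _ => by
      rw [AlternatingMap.smul_apply, smul_eq_mul, dxIA_apply]
  have hFG : F = G := by
    apply Module.Basis.ext_alternating (Pi.basisFun ℝ (Fin n))
    intro w hw
    obtain ⟨I, σ, hσ⟩ := bijOn_en w hw
    have hbasis : (fun i => Pi.basisFun ℝ (Fin n) (w i)) = fun i => bI I (σ i) := by
      funext i
      rw [hσ i]
      simp [bI, Pi.basisFun_apply]
    rw [hbasis]
    have h1 : F (fun i => bI I (σ i)) = Equiv.Perm.sign σ • F (bI I) :=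
      F.map_perm (bI I) σ
    have h2 : G (fun i => bI I (σ i)) = Equiv.Perm.sign σ • G (bI I) :=
      G.map_perm (bI I) σ
    rw [h1, h2]
    congr 1
    rw [hGapp]
    simp only [dxI_bI, mul_ite, mul_one, mul_zero]
    rw [Finset.sum_ite_eq]
    simp
  conv_lhs => rw [hFG]
  exact hGapp v

/-! ### barycentric coordinates -/

lemma dnu_add (j : Fin (n+1)) (a b : Fin n → ℝ) :
    dnu n j (a + b) = dnu n j a + dnu n j b := by
  induction j using Fin.cases with
  | zero => simp [dnu, Finset.sum_add_distrib]; ring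
  | succ i => simp [dnu]

lemma dnu_smul (j : Fin (n+1)) (c : ℝ) (a : Fin n → ℝ) :
    dnu n j (c • a) = c * dnu n j a := by
  induction j using Fin.cases with
  | zero => simp [dnu, Finset.mul_sum]
  | succ i => simp [dnu]

lemma dnu_sub (j : Fin (n+1)) (a b : Fin n → ℝ) :
    dnu n j (a - b) = dnu n j a - dnu n j b := by
  induction j using Fin.cases with
  | zero => simp [dnu, Finset.sum_sub_distrib]; ring
  | succ i => simp [dnu]

lemma dnu_sum (j : Fin (n+1)) {α : Type*} (s : Finset α) (b : α → Fin n → ℝ) :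
    dnu n j (∑ m ∈ s, b m) = ∑ m ∈ s, dnu n j (b m) := by
  classical
  induction s using Finset.induction_on with
  | empty =>
    have : dnu n j (0 : Fin n → ℝ) = 0 := by
      induction j using Fin.cases with
      | zero => simp [dnu]
      | succ i => simp [dnu]
    simpa using this
  | insert _ _ h ih => rw [Finset.sum_insert h, Finset.sum_insert h, dnu_add, ih]

lemma nu_eq (j : Fin (n+1)) (x : Fin n → ℝ) :
    nu n j x = (if j = 0 then 1 else 0) + dnu n j x := by
  induction j using Fin.cases with
  | zero => simp [nu, dnu]; ring
  | succ i => simp [nu, dnu, Fin.succ_ne_zero]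

lemma nu_vert (j i : Fin (n+1)) : nu n j (vert n i) = if i = j then 1 else 0 := by
  induction j using Fin.cases with
  | zero =>
    induction i using Fin.cases with
    | zero => simp [nu, vert]
    | succ m => simp [nu, vert, Pi.single_apply, (Fin.succ_ne_zero m)]
  | succ p =>
    induction i using Fin.cases with
    | zero => simp [nu, vert, (Fin.succ_ne_zero p).symm]
    | succ m =>
      simp only [nu, vert, Fin.cases_succ, Pi.single_apply]
      by_cases h : m = p
      · simp [h]
      · rw [if_neg (fun hc : p = m => h hc.symm),
          if_neg (fun hc : m.succ = p.succ => h (Fin.succ_injective _ hc))]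

lemma dnu_vert (j i : Fin (n+1)) :
    dnu n j (vert n i) = (if i = j then 1 else 0) - (if j = 0 then 1 else 0) := by
  have := nu_eq j (vert n i)
  rw [nu_vert] at this
  linarith

lemma dnu_linComb (j : Fin (n+1)) (a : Fin n → ℝ) (c : Fin k → ℝ) (b : Fin k → Fin n → ℝ) :
    dnu n j (a + ∑ m, c m • b m) = dnu n j a + ∑ m, c m * dnu n j (b m) := by
  rw [dnu_add, dnu_sum]
  congr 1
  exact Finset.sum_congr rfl fun m _ => dnu_smul j (c m) (b m)

section Face
variable (S : Idx (n+1) (k+1))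

lemma facePt_eq (y : Fin k → ℝ) :
    facePt S y = vert n (en S 0) + ∑ m : Fin k, y m • (vert n (en S m.succ) - vert n (en S 0)) :=
  rfl

lemma faceDir_eq (u : Fin k → ℝ) :
    faceDir S u = ∑ m : Fin k, u m • (vert n (en S m.succ) - vert n (en S 0)) := rfl

lemma nu_facePt (j : Fin (n+1)) (y : Fin k → ℝ) :
    nu n j (facePt S y) = (if en S 0 = j then 1 else 0) +
      ∑ m : Fin k, y m * ((if en S m.succ = j then 1 else 0) - (if en S 0 = j then 1 else 0)) := by
  rw [facePt_eq, nu_eq, dnu_linComb, dnu_vert]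
  have : ∀ m : Fin k, y m * dnu n j (vert n (en S m.succ) - vert n (en S 0)) =
      y m * ((if en S m.succ = j then 1 else 0) - (if en S 0 = j then 1 else 0)) := by
    intro m
    rw [dnu_sub, dnu_vert, dnu_vert]
    ring
  rw [Finset.sum_congr rfl fun m _ => this m]
  ring

lemma dnu_faceDir (j : Fin (n+1)) (u : Fin k → ℝ) :
    dnu n j (faceDir S u) =
      ∑ m : Fin k, u m * ((if en S m.succ = j then 1 else 0) - (if en S 0 = j then 1 else 0)) := by
  have h0 : faceDir S u = 0 + ∑ m : Fin k, u m • (vert n (en S m.succ) - vert n (en S 0)) := by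
    rw [zero_add]; rfl
  rw [h0, dnu_linComb]
  have hz : dnu n j (0 : Fin n → ℝ) = 0 := by
    induction j using Fin.cases with
    | zero => simp [dnu]
    | succ i => simp [dnu]
  rw [hz, zero_add]
  exact Finset.sum_congr rfl fun m _ => by rw [dnu_sub, dnu_vert, dnu_vert]; ring

lemma en_succ_ne_en_zero (m : Fin k) : en S m.succ ≠ en S 0 :=
  fun hc => (Fin.succ_ne_zero m) (en_inj S hc)

lemma nu_facePt_not_mem {j : Fin (n+1)} (hj : j ∉ S.1) (y : Fin k → ℝ) :
    nu n j (facePt S y) = 0 := by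
  rw [nu_facePt]
  have h0 : en S 0 ≠ j := fun hc => hj (hc ▸ en_mem S 0)
  have hs : ∀ m : Fin k, en S m.succ ≠ j := fun m hc => hj (hc ▸ en_mem S m.succ)
  rw [if_neg h0, Finset.sum_eq_zero (fun m _ => by rw [if_neg (hs m)]; ring)]
  ring

lemma dnu_faceDir_not_mem {j : Fin (n+1)} (hj : j ∉ S.1) (u : Fin k → ℝ) :
    dnu n j (faceDir S u) = 0 := by
  rw [dnu_faceDir]
  exact Finset.sum_eq_zero fun m _ => by
    rw [if_neg (fun hc : en S m.succ = j => hj (hc ▸ en_mem S m.succ))]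
    rw [if_neg (fun hc : en S 0 = j => hj (hc ▸ en_mem S 0))]
    ring

lemma nu_facePt_mem (p : Fin (k+1)) (y : Fin k → ℝ) :
    nu n (en S p) (facePt S y) = nu k p y := by
  rw [nu_facePt]
  induction p using Fin.cases with
  | zero =>
    have h1 : ∀ m : Fin k, (if en S m.succ = en S 0 then (1:ℝ) else 0) = 0 :=
      fun m => if_neg (en_succ_ne_en_zero S m)
    simp only [h1, nu, Fin.cases_zero, eq_self_iff_true, if_true]
    rw [Finset.sum_congr rfl (fun m (_ : m ∈ Finset.univ) =>
      (by ring : y m * ((0:ℝ) - 1) = -(y m))), Finset.sum_neg_distrib]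
    ring
  | succ p =>
    have h0 : (if en S 0 = en S p.succ then (1:ℝ) else 0) = 0 :=
      if_neg (fun hc => en_succ_ne_en_zero S p hc.symm)
    have h1 : ∀ m : Fin k, (if en S m.succ = en S p.succ then (1:ℝ) else 0) =
        if m = p then 1 else 0 := by
      intro m
      by_cases h : m = p
      · simp [h]
      · rw [if_neg (fun hc => h (Fin.succ_injective _ (en_inj S hc))), if_neg h]
    simp only [h1, h0, nu, Fin.cases_succ, sub_zero, zero_add, mul_ite, mul_one, mul_zero]
    simp [Finset.sum_ite_eq']

lemma dnu_faceDir_mem (p : Fin (k+1)) (u : Fin k → ℝ) :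
    dnu n (en S p) (faceDir S u) = dnu k p u := by
  rw [dnu_faceDir]
  induction p using Fin.cases with
  | zero =>
    have h1 : ∀ m : Fin k, (if en S m.succ = en S 0 then (1:ℝ) else 0) = 0 :=
      fun m => if_neg (en_succ_ne_en_zero S m)
    simp only [h1, dnu, Fin.cases_zero, eq_self_iff_true, if_true]
    rw [Finset.sum_congr rfl (fun m (_ : m ∈ Finset.univ) =>
      (by ring : u m * ((0:ℝ) - 1) = -(u m))), Finset.sum_neg_distrib]
  | succ p =>
    have h0 : (if en S 0 = en S p.succ then (1:ℝ) else 0) = 0 :=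
      if_neg (fun hc => en_succ_ne_en_zero S p hc.symm)
    have h1 : ∀ m : Fin k, (if en S m.succ = en S p.succ then (1:ℝ) else 0) =
        if m = p then 1 else 0 := by
      intro m
      by_cases h : m = p
      · simp [h]
      · rw [if_neg (fun hc => h (Fin.succ_injective _ (en_inj S hc))), if_neg h]
    simp only [h1, h0, dnu, Fin.cases_succ, sub_zero, mul_ite, mul_one, mul_zero]
    simp [Finset.sum_ite_eq']

end Face

/-! ### pullbacks of Whitney forms to faces -/

lemma whitneyFace_def (T : Idx (n+1) (k+1)) (x : Fin n → ℝ) (v : Fin k → Fin n → ℝ) :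
    whitneyFace T x v = (Nat.factorial k : ℝ) * ∑ j : Fin (k+1), (-1 : ℝ) ^ (j : ℕ) *
      nu n (en T j) x *
      Matrix.det (Matrix.of fun (t : Fin k) (m : Fin k) => dnu n (en T (j.succAbove t)) (v m)) :=
  rfl

lemma exists_not_mem {S T : Idx (n+1) (k+1)} (hST : T ≠ S) : ∃ τ ∈ T.1, τ ∉ S.1 := by
  by_contra h
  push_neg at h
  exact hST (Subtype.ext (Finset.eq_of_subset_of_card_le h (by rw [S.2, T.2])))

lemma whitneyFace_pull_ne (S T : Idx (n+1) (k+1)) (hST : T ≠ S) (y : Fin k → ℝ)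
    (w : Fin k → Fin k → ℝ) :
    whitneyFace T (facePt S y) (fun i => faceDir S (w i)) = 0 := by
  obtain ⟨τ, hτT, hτS⟩ := exists_not_mem hST
  obtain ⟨j₀, hj₀⟩ := en_surj T hτT
  rw [whitneyFace_def, Finset.sum_eq_zero, mul_zero]
  intro j _
  rcases eq_or_ne j j₀ with h | h
  · subst h
    rw [nu_facePt_not_mem S (by rw [hj₀]; exact hτS), mul_zero, zero_mul]
  · obtain ⟨t, ht⟩ := Fin.exists_succAbove_eq (Ne.symm h)
    rw [Matrix.det_eq_zero_of_row_eq_zero t (fun m => ?_), mul_zero]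
    show dnu n (en T (j.succAbove t)) (faceDir S (w m)) = 0
    rw [ht, hj₀]
    exact dnu_faceDir_not_mem S hτS (w m)

lemma whitneyFace_pull_self (S : Idx (n+1) (k+1)) (y : Fin k → ℝ) (w : Fin k → Fin k → ℝ) :
    whitneyFace S (facePt S y) (fun i => faceDir S (w i)) =
      (Nat.factorial k : ℝ) * Matrix.det (Matrix.of fun i j => w j i) := by
  rw [whitneyFace_def]
  congr 1
  have hterm : ∀ j : Fin (k+1), (-1:ℝ)^(j:ℕ) * nu n (en S j) (facePt S y) *
      Matrix.det (Matrix.of fun t m => dnu n (en S (j.succAbove t)) (faceDir S (w m))) =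
      (-1:ℝ)^(j:ℕ) * nu k j y *
      Matrix.det (Matrix.of fun t m => dnu k (j.succAbove t) (w m)) := by
    intro j
    rw [nu_facePt_mem]
    congr 2
    ext t m
    exact dnu_faceDir_mem S (j.succAbove t) (w m)
  rw [Finset.sum_congr rfl fun j _ => hterm j]
  -- the (k+1) × (k+1) matrix whose first column collects the barycentric coordinates
  set B : Matrix (Fin (k+1)) (Fin (k+1)) ℝ :=
    Matrix.of (fun j c => Fin.cases (nu k j y) (fun m => dnu k j (w m)) c) with hB
  have h1 : ∑ j : Fin (k+1), (-1:ℝ)^(j:ℕ) * nu k j y *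
      Matrix.det (Matrix.of fun t m => dnu k (j.succAbove t) (w m)) = B.det := by
    rw [Matrix.det_succ_column_zero]
    refine Finset.sum_congr rfl fun j _ => rfl
  rw [h1]
  -- replace row 0 by the sum of all rows
  have hrow : (∑ i : Fin (k+1), (1:ℝ) • B i) = fun c => Fin.cases 1 (fun _ => 0) c := by
    funext c
    rw [Finset.sum_apply]
    simp only [one_smul]
    induction c using Fin.cases with
    | zero =>
      have : ∀ j : Fin (k+1), B j 0 = nu k j y := fun j => rfl
      rw [Finset.sum_congr rfl fun j _ => this j, Fin.sum_univ_succ]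
      simp [nu]
    | succ m =>
      have : ∀ j : Fin (k+1), B j m.succ = dnu k j (w m) := fun j => rfl
      rw [Finset.sum_congr rfl fun j _ => this j, Fin.sum_univ_succ]
      simp [dnu]
  have h2 : (B.updateRow 0 (∑ i, (1:ℝ) • B i)).det = (1:ℝ) • B.det :=
    Matrix.det_updateRow_sum B 0 (fun _ => 1)
  rw [one_smul] at h2
  rw [← h2, hrow]
  -- expand along the new first row
  rw [Matrix.det_succ_row_zero]
  rw [Fin.sum_univ_succ]
  have hz : ∀ c : Fin k,
      (-1:ℝ)^((c.succ : ℕ)) * (B.updateRow 0 (fun c => Fin.cases 1 (fun _ => 0) c)) 0 c.succ *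
      Matrix.det ((B.updateRow 0 (fun c => Fin.cases 1 (fun _ => 0) c)).submatrix
        Fin.succ c.succ.succAbove) = 0 := by
    intro c
    rw [Matrix.updateRow_self]
    simp
  rw [Finset.sum_congr rfl fun c _ => hz c, Finset.sum_const_zero, add_zero,
    Matrix.updateRow_self]
  simp only [Fin.cases_zero, Fin.val_zero, pow_zero, one_mul, Fin.succAbove_zero]
  have : ((B.updateRow 0 (fun c => Fin.cases 1 (fun _ => 0) c)).submatrix Fin.succ Fin.succ) =
      Matrix.of (fun i j => w j i) := by
    ext t m
    rw [Matrix.submatrix_apply, Matrix.updateRow_ne (Fin.succ_ne_zero t)]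
    rfl
  rw [this]

/-! ### the Whitney form is an alternating form with affine coefficients -/

def dnuRows (S : Idx (n+1) (k+1)) (j : Fin (k+1)) : (Fin n → ℝ) →ₗ[ℝ] (Fin k → ℝ) where
  toFun v₀ := fun t => dnu n (en S (j.succAbove t)) v₀
  map_add' a b := by funext t; exact dnu_add _ a b
  map_smul' c a := by funext t; simpa using dnu_smul (en S (j.succAbove t)) c a

noncomputable def whitneyAlt (S : Idx (n+1) (k+1)) (x : Fin n → ℝ) :
    (Fin n → ℝ) [⋀^Fin k]→ₗ[ℝ] ℝ :=
  (Nat.factorial k : ℝ) • ∑ j : Fin (k+1), ((-1:ℝ)^(j:ℕ) * nu n (en S j) x) •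
    (Matrix.detRowAlternating.compLinearMap (dnuRows S j))

lemma whitneyAlt_apply (S : Idx (n+1) (k+1)) (x : Fin n → ℝ) (v : Fin k → Fin n → ℝ) :
    whitneyAlt S x v = whitneyFace S x v := by
  rw [whitneyFace_def, whitneyAlt, AlternatingMap.smul_apply, altsum_apply, smul_eq_mul]
  congr 1
  refine Finset.sum_congr rfl fun j _ => ?_
  rw [AlternatingMap.smul_apply, smul_eq_mul]
  congr 1
  rw [← Matrix.det_transpose]
  rfl

lemma whitneyFace_expand (S : Idx (n+1) (k+1)) (x : Fin n → ℝ) (v : Fin k → Fin n → ℝ) :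
    whitneyFace S x v = ∑ I : Idx n k, whitneyFace S x (bI I) * dxI I v := by
  rw [← whitneyAlt_apply, alt_expand]
  exact Finset.sum_congr rfl fun I _ => by rw [whitneyAlt_apply]

lemma whitney_expand (c : Idx (n+1) (k+1) → ℝ) (x : Fin n → ℝ) (v : Fin k → Fin n → ℝ) :
    whitney c x v = ∑ I : Idx n k, whitney c x (bI I) * dxI I v := by
  unfold whitney
  calc ∑ S, c S * whitneyFace S x v
      = ∑ S, ∑ I : Idx n k, c S * whitneyFace S x (bI I) * dxI I v := by
        refine Finset.sum_congr rfl fun S _ => ?_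
        rw [whitneyFace_expand S x v, Finset.mul_sum]
        exact Finset.sum_congr rfl fun I _ => by ring
    _ = ∑ I : Idx n k, ∑ S, c S * whitneyFace S x (bI I) * dxI I v := Finset.sum_comm
    _ = ∑ I : Idx n k, (∑ S, c S * whitneyFace S x (bI I)) * dxI I v := by
        refine Finset.sum_congr rfl fun I _ => ?_
        rw [Finset.sum_mul]

/-! ### affine functions -/

lemma _root_.IsAffineFn.const (c : ℝ) : IsAffineFn (fun _ : Fin n → ℝ => c) :=
  ⟨0, c, fun x => by simp⟩

lemma _root_.IsAffineFn.mul_const {f : (Fin n → ℝ) → ℝ} (hf : IsAffineFn f) (c : ℝ) :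
    IsAffineFn (fun x => f x * c) := by
  obtain ⟨a, b, hab⟩ := hf
  refine ⟨fun i => a i * c, b * c, fun x => ?_⟩
  show f x * c = _
  rw [hab x, add_mul, Finset.sum_mul]
  congr 1
  exact Finset.sum_congr rfl fun i _ => by ring

lemma _root_.IsAffineFn.const_mul {f : (Fin n → ℝ) → ℝ} (hf : IsAffineFn f) (c : ℝ) :
    IsAffineFn (fun x => c * f x) := by
  have := hf.mul_const c
  simpa [mul_comm] using this

lemma _root_.IsAffineFn.add {f g : (Fin n → ℝ) → ℝ} (hf : IsAffineFn f) (hg : IsAffineFn g) :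
    IsAffineFn (fun x => f x + g x) := by
  obtain ⟨a, b, hab⟩ := hf
  obtain ⟨a', b', hab'⟩ := hg
  refine ⟨a + a', b + b', fun x => ?_⟩
  show f x + g x = _
  rw [hab x, hab' x]
  simp only [Pi.add_apply]
  rw [Finset.sum_congr rfl fun i _ => (by ring : (a i + a' i) * x i = a i * x i + a' i * x i),
    Finset.sum_add_distrib]
  ring

lemma _root_.IsAffineFn.sub {f g : (Fin n → ℝ) → ℝ} (hf : IsAffineFn f) (hg : IsAffineFn g) :
    IsAffineFn (fun x => f x - g x) := by
  have hneg : IsAffineFn (fun x => g x * (-1)) := hg.mul_const (-1)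
  have := hf.add hneg
  simpa [sub_eq_add_neg] using this

lemma _root_.IsAffineFn.finsum {α : Type*} (s : Finset α) (g : α → (Fin n → ℝ) → ℝ)
    (h : ∀ a ∈ s, IsAffineFn (g a)) : IsAffineFn (fun x => ∑ a ∈ s, g a x) := by
  classical
  induction s using Finset.induction_on with
  | empty => simpa using IsAffineFn.const (n := n) 0
  | insert _ _ hm ih =>
    rename_i a s
    have := (h a (Finset.mem_insert_self a s)).add
      (ih fun b hb => h b (Finset.mem_insert_of_mem hb))
    simp only [Finset.sum_insert hm]
    exact this

lemma affine_nu (j : Fin (n+1)) : IsAffineFn (nu n j) := by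
  induction j using Fin.cases with
  | zero =>
    refine ⟨fun _ => -1, 1, fun x => ?_⟩
    show (1:ℝ) - ∑ i, x i = ∑ i : Fin n, (fun _ => (-1:ℝ)) i * x i + 1
    rw [Finset.sum_congr rfl fun i _ => (by ring : (fun _ => (-1:ℝ)) i * x i = -(x i)),
      Finset.sum_neg_distrib]
    ring
  | succ i =>
    refine ⟨Pi.single i 1, 0, fun x => ?_⟩
    have hp : ∀ p : Fin n, (Pi.single i 1 : Fin n → ℝ) p * x p = if p = i then x p else 0 := by
      intro p
      rw [Pi.single_apply]
      split <;> simp_all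
    rw [Finset.sum_congr rfl fun p _ => hp p]
    simp [nu, Finset.sum_ite_eq']

lemma affine_whitneyFace (S : Idx (n+1) (k+1)) (w₀ : Fin k → Fin n → ℝ) :
    IsAffineFn (fun x => whitneyFace S x w₀) := by
  have hdef : ∀ x, whitneyFace S x w₀ = (Nat.factorial k : ℝ) *
      ∑ j : Fin (k+1), (-1:ℝ)^(j:ℕ) * nu n (en S j) x *
        Matrix.det (Matrix.of fun t m => dnu n (en S (j.succAbove t)) (w₀ m)) :=
    fun x => whitneyFace_def S x w₀
  have h : IsAffineFn (fun x => ∑ j : Fin (k+1), (-1:ℝ)^(j:ℕ) * nu n (en S j) x *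
      Matrix.det (Matrix.of fun t m => dnu n (en S (j.succAbove t)) (w₀ m))) := by
    refine IsAffineFn.finsum _ _ fun j _ => ?_
    exact ((affine_nu (en S j)).const_mul ((-1:ℝ)^(j:ℕ))).mul_const _
  obtain ⟨a, b, hab⟩ := h.const_mul (Nat.factorial k : ℝ)
  exact ⟨a, b, fun x => by show whitneyFace S x w₀ = _; rw [hdef x]; exact hab x⟩

lemma affine_whitney (c : Idx (n+1) (k+1) → ℝ) (w₀ : Fin k → Fin n → ℝ) :
    IsAffineFn (fun x => whitney c x w₀) := by
  refine IsAffineFn.finsum _ _ fun S _ => ?_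
  exact (affine_whitneyFace S w₀).const_mul (c S)


/-! ### the volume of the standard simplex -/

lemma isClosed_stdSimp (m : ℕ) : IsClosed (stdSimp m) := by
  have h1 : stdSimp m = (⋂ i, {x : Fin m → ℝ | 0 ≤ x i}) ∩ {x | ∑ i, x i ≤ 1} := by
    ext x
    simp [stdSimp, Set.mem_iInter]
  rw [h1]
  exact (isClosed_iInter fun i => isClosed_le continuous_const (continuous_apply i)).inter
    (isClosed_le (continuous_finset_sum _ fun i _ => continuous_apply i) continuous_const)

lemma measurableSet_stdSimp (m : ℕ) : MeasurableSet (stdSimp m) :=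
  (isClosed_stdSimp m).measurableSet

lemma stdSimp_scaled (m : ℕ) {c : ℝ} (hc : 0 < c) :
    {x : Fin m → ℝ | (∀ i, 0 ≤ x i) ∧ ∑ i, x i ≤ c} = c • stdSimp m := by
  ext x
  rw [Set.mem_smul_set_iff_inv_smul_mem₀ hc.ne']
  constructor
  · rintro ⟨h1, h2⟩
    constructor
    · intro i
      simp only [Pi.smul_apply, smul_eq_mul]
      exact mul_nonneg (inv_nonneg.2 hc.le) (h1 i)
    · have : ∑ i, (c⁻¹ • x) i = c⁻¹ * ∑ i, x i := by
        simp only [Pi.smul_apply, smul_eq_mul]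
        rw [Finset.mul_sum]
      rw [this]
      rw [inv_mul_le_iff₀ hc, mul_one]
      exact h2
  · rintro ⟨h1, h2⟩
    have hs : ∑ i, (c⁻¹ • x) i = c⁻¹ * ∑ i, x i := by
      simp only [Pi.smul_apply, smul_eq_mul]
      rw [Finset.mul_sum]
    rw [hs, inv_mul_le_iff₀ hc, mul_one] at h2
    refine ⟨fun i => ?_, h2⟩
    have := h1 i
    simp only [Pi.smul_apply, smul_eq_mul] at this
    nlinarith [this, inv_pos.2 hc]

lemma volume_scaled (m : ℕ) {c : ℝ} (hc : 0 < c) :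
    volume {x : Fin m → ℝ | (∀ i, 0 ≤ x i) ∧ ∑ i, x i ≤ c} =
      ENNReal.ofReal (c ^ m) * volume (stdSimp m) := by
  rw [stdSimp_scaled m hc, Measure.addHaar_smul_of_nonneg volume hc.le,
    Module.finrank_fin_fun]

lemma volume_stdSimp : ∀ m : ℕ, volume (stdSimp m) = ENNReal.ofReal ((m.factorial : ℝ)⁻¹) := by
  intro m
  induction m with
  | zero =>
    have h : stdSimp 0 = Set.univ := by
      ext x
      simp [stdSimp]
    rw [h]
    rw [MeasureTheory.volume_pi]
    rw [MeasureTheory.Measure.pi_univ]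
    simp
  | succ k ih =>
    -- transfer to the product space
    set e := MeasurableEquiv.piFinSuccAbove (fun _ : Fin (k+1) => ℝ) 0 with he
    set T : Set (ℝ × (Fin k → ℝ)) :=
      {p | 0 ≤ p.1 ∧ (∀ i, 0 ≤ p.2 i) ∧ p.1 + ∑ i, p.2 i ≤ 1} with hT
    have hTclosed : IsClosed T := by
      have : T = {p : ℝ × (Fin k → ℝ) | 0 ≤ p.1} ∩
          ((⋂ i, {p : ℝ × (Fin k → ℝ) | 0 ≤ p.2 i}) ∩
            {p : ℝ × (Fin k → ℝ) | p.1 + ∑ i, p.2 i ≤ 1}) := by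
        ext p
        simp [hT, Set.mem_iInter, and_assoc]
      rw [this]
      refine (isClosed_le continuous_const continuous_fst).inter
        ((isClosed_iInter fun i => isClosed_le continuous_const
          ((continuous_apply i).comp continuous_snd)).inter (isClosed_le (f := fun p : ℝ × (Fin k → ℝ) => p.1 + ∑ i, p.2 i) ?_ continuous_const))
      exact continuous_fst.add (continuous_finset_sum _ fun i _ =>
        (continuous_apply i).comp continuous_snd)
    have hTmeas : MeasurableSet T := hTclosed.measurableSet
    have hpre : e ⁻¹' T = stdSimp (k+1) := by
      ext x
      simp only [Set.mem_preimage, hT, Set.mem_setOf_eq, MeasurableEquiv.piFinSuccAbove_apply,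
        stdSimp]
      constructor
      · rintro ⟨h0, hrest, hsum⟩
        refine ⟨fun i => ?_, ?_⟩
        · induction i using Fin.cases with
          | zero => exact h0
          | succ j => simpa [he, Fin.tail] using hrest j
        · rw [Fin.sum_univ_succ]
          exact hsum
      · rintro ⟨hpos, hsum⟩
        refine ⟨hpos 0, fun j => hpos _, ?_⟩
        rw [Fin.sum_univ_succ] at hsum
        exact hsum
    have hmp := volume_preserving_piFinSuccAbove (fun _ : Fin (k+1) => ℝ) 0
    have hvol : volume (stdSimp (k+1)) = (volume.prod volume) T := by
      rw [← hpre]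
      rw [← Measure.volume_eq_prod]
      exact hmp.measure_preimage hTmeas.nullMeasurableSet
    rw [hvol, Measure.prod_apply hTmeas]
    -- compute the slices
    have hslice : ∀ t : ℝ, t ≠ 1 → volume (Prod.mk t ⁻¹' T) =
        Set.indicator (Set.Ico (0:ℝ) 1)
          (fun t => ENNReal.ofReal ((1-t)^k) * volume (stdSimp k)) t := by
      intro t ht
      rcases lt_or_ge t 0 with h | h
      · have h1 : Prod.mk t ⁻¹' T = ∅ := by
          ext x
          simp only [Set.mem_preimage, hT, Set.mem_setOf_eq, Set.mem_empty_iff_false,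
            iff_false]
          rintro ⟨h0, _, _⟩
          linarith
        rw [h1, Set.indicator_of_notMem (fun hc => absurd hc.1 (not_le.2 h) : t ∉ Set.Ico (0:ℝ) 1)]
        simp
      rcases lt_or_ge t 1 with h2 | h2
      · have h1 : Prod.mk t ⁻¹' T = {x : Fin k → ℝ | (∀ i, 0 ≤ x i) ∧ ∑ i, x i ≤ 1 - t} := by
          ext x
          simp only [Set.mem_preimage, hT, Set.mem_setOf_eq]
          constructor
          · rintro ⟨_, hpos, hsum⟩
            exact ⟨hpos, by linarith⟩
          · rintro ⟨hpos, hsum⟩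
            exact ⟨h, hpos, by linarith⟩
        rw [h1, volume_scaled k (by linarith : (0:ℝ) < 1 - t),
          Set.indicator_of_mem (Set.mem_Ico.2 ⟨h, h2⟩)]
      · -- t > 1 (as t ≠ 1, t ≥ 1)
        have h3 : 1 < t := lt_of_le_of_ne h2 (Ne.symm ht)
        have h1 : Prod.mk t ⁻¹' T = ∅ := by
          ext x
          simp only [Set.mem_preimage, hT, Set.mem_setOf_eq, Set.mem_empty_iff_false,
            iff_false]
          rintro ⟨h0, hpos, hsum⟩
          have : (0:ℝ) ≤ ∑ i, x i := Finset.sum_nonneg fun i _ => hpos i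
          linarith
        rw [h1, Set.indicator_of_notMem (fun hc => absurd hc.2 (not_lt.2 h2) : t ∉ Set.Ico (0:ℝ) 1)]
        simp
    have hae : (fun t : ℝ => volume (Prod.mk t ⁻¹' T)) =ᵐ[volume]
        Set.indicator (Set.Ico (0:ℝ) 1)
          (fun t => ENNReal.ofReal ((1-t)^k) * volume (stdSimp k)) := by
      have hne : ∀ᵐ t : ℝ, t ≠ 1 := by
        rw [MeasureTheory.ae_iff]
        have : {t : ℝ | ¬ t ≠ 1} = {1} := by
          ext t; simp
        rw [this]
        exact measure_singleton 1
      filter_upwards [hne] with t ht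
      exact hslice t ht
    rw [MeasureTheory.lintegral_congr_ae hae]
    rw [MeasureTheory.lintegral_indicator measurableSet_Ico]
    rw [MeasureTheory.lintegral_mul_const _ (by
      apply Measurable.ennreal_ofReal
      exact ((continuous_const.sub continuous_id).pow k).measurable)]
    -- compute the lintegral
    have hlint : ∫⁻ t in Set.Ico (0:ℝ) 1, ENNReal.ofReal ((1-t)^k) =
        ENNReal.ofReal (((k:ℝ)+1)⁻¹) := by
      rw [Measure.restrict_congr_set Ico_ae_eq_Ioc]
      have hInt : MeasureTheory.IntegrableOn (fun t : ℝ => (1-t)^k) (Set.Ioc 0 1) volume := by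
        apply Continuous.integrableOn_Ioc
        exact (continuous_const.sub continuous_id).pow k
      rw [← MeasureTheory.ofReal_integral_eq_lintegral_ofReal hInt]
      · congr 1
        have : ∫ t in Set.Ioc (0:ℝ) 1, (1-t)^k = ∫ t in (0:ℝ)..1, (1-t)^k := by
          rw [intervalIntegral.integral_of_le zero_le_one]
        rw [this]
        have hsub : ∫ t in (0:ℝ)..1, (1-t)^k = ∫ t in (0:ℝ)..1, t^k := by
          have := intervalIntegral.integral_comp_sub_left (a := (0:ℝ)) (b := 1)
            (fun u => u^k) 1
          simpa using this
        rw [hsub, integral_pow]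
        push_cast
        ring
      · refine (MeasureTheory.ae_restrict_iff' measurableSet_Ioc).2 ?_
        filter_upwards with t ht
        show (0:ℝ) ≤ (1-t)^k
        have : (0:ℝ) ≤ 1 - t := by linarith [ht.2]
        positivity
    rw [hlint, ih, ← ENNReal.ofReal_mul (by positivity)]
    congr 1
    rw [Nat.factorial_succ]
    push_cast
    rw [mul_inv]

/-! ### the face integrals of a form with constant pullbacks -/

lemma faceIntegral_const {F : (Fin n → ℝ) → (Fin k → Fin n → ℝ) → ℝ}
    (S : Idx (n+1) (k+1)) (cst : ℝ)
    (h : ∀ y ∈ stdSimp k, ∀ w : Fin k → Fin k → ℝ,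
      F (facePt S y) (fun i => faceDir S (w i)) =
        cst * Matrix.det (Matrix.of fun i j => w j i)) :
    faceIntegral S F = cst * (k.factorial : ℝ)⁻¹ := by
  unfold faceIntegral
  have heq : Set.EqOn (fun y => F (facePt S y) (fun s => faceDir S (Pi.single s 1)))
      (fun _ => cst) (stdSimp k) := by
    intro y hy
    have hdet : Matrix.det (Matrix.of fun i j => (Pi.single j 1 : Fin k → ℝ) i) = 1 := by
      have h1 : (Matrix.of fun i j => (Pi.single j 1 : Fin k → ℝ) i) =
          (1 : Matrix (Fin k) (Fin k) ℝ) := by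
        ext i j
        simp [Matrix.one_apply, Pi.single_apply]
      rw [h1, Matrix.det_one]
    have := h y hy (fun i => Pi.single i 1)
    rw [hdet, mul_one] at this
    exact this
  rw [MeasureTheory.setIntegral_congr_fun (measurableSet_stdSimp k) heq,
    MeasureTheory.setIntegral_const, measureReal_def, volume_stdSimp k,
    ENNReal.toReal_ofReal (by positivity), smul_eq_mul, mul_comm]

/-! ### special faces -/

lemma zero_mem_stdSimp : (0 : Fin k → ℝ) ∈ stdSimp k :=
  ⟨fun i => le_refl 0, by simp⟩

lemma single_mem_stdSimp (t : Fin k) : (Pi.single t 1 : Fin k → ℝ) ∈ stdSimp k := by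
  constructor
  · intro i
    rw [Pi.single_apply]
    split <;> norm_num
  · have : ∀ i : Fin k, (Pi.single t 1 : Fin k → ℝ) i = if i = t then 1 else 0 :=
      fun i => Pi.single_apply t 1 i
    rw [Finset.sum_congr rfl fun i _ => this i]
    simp [Finset.sum_ite_eq']

lemma vert_zero : vert n 0 = 0 := rfl

lemma vert_succ (p : Fin n) : vert n p.succ = Pi.single p 1 := by
  simp [vert]

lemma facePt_zero (S : Idx (n+1) (k+1)) : facePt S 0 = vert n (en S 0) := by
  rw [facePt_eq]
  simp

lemma facePt_single (S : Idx (n+1) (k+1)) (t : Fin k) :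
    facePt S (Pi.single t 1) = vert n (en S t.succ) := by
  rw [facePt_eq]
  rw [Finset.sum_eq_single t (fun m _ hm => by rw [Pi.single_eq_of_ne hm, zero_smul])
    (fun h => absurd (Finset.mem_univ t) h)]
  rw [Pi.single_eq_same, one_smul, add_sub_cancel]

lemma faceDir_single (S : Idx (n+1) (k+1)) (i : Fin k) :
    faceDir S (Pi.single i 1) = vert n (en S i.succ) - vert n (en S 0) := by
  rw [faceDir_eq]
  rw [Finset.sum_eq_single i (fun m _ hm => by rw [Pi.single_eq_of_ne hm, zero_smul])
    (fun h => absurd (Finset.mem_univ i) h)]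
  rw [Pi.single_eq_same, one_smul]

lemma faceDir_sub (S : Idx (n+1) (k+1)) (u u' : Fin k → ℝ) :
    faceDir S (u - u') = faceDir S u - faceDir S u' := by
  rw [faceDir_eq, faceDir_eq, faceDir_eq, ← Finset.sum_sub_distrib]
  exact Finset.sum_congr rfl fun m _ => by rw [Pi.sub_apply, sub_smul]

/-- The face through the origin with edge directions given by `I`. -/
def SA (I : Idx n k) : Idx (n+1) (k+1) :=
  ⟨insert 0 (I.1.image Fin.succ), by
    have h0 : (0 : Fin (n+1)) ∉ I.1.image Fin.succ := by
      simp [Fin.succ_ne_zero]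
    rw [Finset.card_insert_of_notMem h0,
      Finset.card_image_of_injective _ (Fin.succ_injective n), I.2]⟩

lemma en_SA (I : Idx n k) :
    en (SA I) = (Fin.cases 0 (fun t => (en I t).succ) : Fin (k+1) → Fin (n+1)) := by
  have hmem : ∀ x : Fin (k+1),
      (Fin.cases 0 (fun t => (en I t).succ) : Fin (k+1) → Fin (n+1)) x ∈ (SA I).1 := by
    intro x
    induction x using Fin.cases with
    | zero => simp [SA]
    | succ t =>
      simp only [Fin.cases_succ, SA, Finset.mem_insert, Finset.mem_image]
      exact Or.inr ⟨en I t, en_mem I t, rfl⟩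
  have hmono : StrictMono (Fin.cases 0 (fun t => (en I t).succ) : Fin (k+1) → Fin (n+1)) := by
    intro a b hab
    induction b using Fin.cases with
    | zero => exact absurd hab (Fin.not_lt_zero a)
    | succ t =>
      induction a using Fin.cases with
      | zero => simp [Fin.succ_pos]
      | succ s =>
        simp only [Fin.cases_succ]
        rw [Fin.succ_lt_succ_iff]
        exact (I.1.orderEmbOfFin I.2).strictMono (Fin.succ_lt_succ_iff.1 hab)
  exact ((Finset.orderEmbOfFin_unique (SA I).2 hmem hmono)).symm

/-- The face avoiding the origin with vertex directions given by `J`. -/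
def SB (J : Idx n (k+1)) : Idx (n+1) (k+1) :=
  ⟨J.1.image Fin.succ, by
    rw [Finset.card_image_of_injective _ (Fin.succ_injective n), J.2]⟩

lemma en_SB (J : Idx n (k+1)) : en (SB J) = fun m => (en J m).succ := by
  have hmem : ∀ x : Fin (k+1), (en J x).succ ∈ (SB J).1 := by
    intro x
    simp only [SB, Finset.mem_image]
    exact ⟨en J x, en_mem J x, rfl⟩
  have hmono : StrictMono (fun m : Fin (k+1) => (en J m).succ) := by
    intro a b hab
    exact Fin.succ_lt_succ_iff.2 ((J.1.orderEmbOfFin J.2).strictMono hab)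
  exact ((Finset.orderEmbOfFin_unique (SB J).2 hmem hmono)).symm


/-! ### vanishing of affine forms with vanishing pullbacks -/

section Vanish
variable {D : Idx n k → (Fin n → ℝ) → ℝ}
  (hD : ∀ S : Idx (n+1) (k+1), ∀ y ∈ stdSimp k, ∀ w : Fin k → Fin k → ℝ,
    ∑ I : Idx n k, D I (facePt S y) * dxI I (fun i => faceDir S (w i)) = 0)

include hD

lemma vanish_A (I : Idx n k) {y : Fin k → ℝ} (hy : y ∈ stdSimp k) :
    D I (facePt (SA I) y) = 0 := by
  have hdir : (fun i => faceDir (SA I) (Pi.single i 1)) = bI I := by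
    funext i
    rw [faceDir_single, en_SA]
    simp only [Fin.cases_succ, Fin.cases_zero, vert_zero, vert_succ, sub_zero]
    rfl
  have h := hD (SA I) y hy (fun i => Pi.single i 1)
  rw [hdir] at h
  rw [Finset.sum_congr rfl (fun I' _ => by rw [dxI_bI I' I])] at h
  simp only [mul_ite, mul_one, mul_zero] at h
  rwa [Finset.sum_ite_eq Finset.univ I (fun I' => D I' (facePt (SA I) y)),
    if_pos (Finset.mem_univ I)] at h

lemma vanish_zero (I : Idx n k) : D I 0 = 0 := by
  have := vanish_A hD I zero_mem_stdSimp
  rw [facePt_zero, en_SA] at this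
  simp only [Fin.cases_zero] at this
  rwa [vert_zero] at this

lemma vanish_mem (I : Idx n k) {p : Fin n} (hp : p ∈ I.1) : D I (Pi.single p 1) = 0 := by
  obtain ⟨t, ht⟩ := en_surj I hp
  have := vanish_A hD I (single_mem_stdSimp t)
  rw [facePt_single, en_SA] at this
  simp only [Fin.cases_succ] at this
  rwa [vert_succ, ht] at this

omit hD in
lemma faceDir_indic (J : Idx n (k+1)) {q : Fin n} (hq : q ∈ J.1) :
    faceDir (SB J) (fun m => if en J m.succ = q then (1:ℝ) else 0) =
      Pi.single q 1 - Pi.single (en J 0) 1 := by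
  rw [faceDir_eq]
  simp only [en_SB, vert_succ]
  obtain ⟨p, hp⟩ := en_surj J hq
  induction p using Fin.cases with
  | zero =>
    rw [Finset.sum_eq_zero (fun m _ => by
      rw [if_neg (fun hc => Fin.succ_ne_zero m (en_inj J (hc.trans hp.symm))), zero_smul])]
    rw [← hp, sub_self]
  | succ t =>
    rw [Finset.sum_eq_single t (fun m _ hm => by
        rw [if_neg (fun hc => hm (Fin.succ_injective _ (en_inj J (hc.trans hp.symm)))),
          zero_smul])
      (fun h => absurd (Finset.mem_univ t) h)]
    rw [if_pos hp, one_smul, hp]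

lemma vanish_not_mem (I : Idx n k) {j : Fin n} (hj : j ∉ I.1) :
    D I (Pi.single j 1) = 0 := by
  classical
  set J : Idx n (k+1) := ⟨insert j I.1, by rw [Finset.card_insert_of_notMem hj, I.2]⟩ with hJ
  have hjJ : j ∈ J.1 := Finset.mem_insert_self j I.1
  -- a point of the standard simplex mapping to the vertex eⱼ
  obtain ⟨r, hr⟩ := en_surj J hjJ
  obtain ⟨y₀, hy₀, hx⟩ : ∃ y₀ ∈ stdSimp k, facePt (SB J) y₀ = Pi.single j 1 := by
    induction r using Fin.cases with
    | zero =>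
      refine ⟨0, zero_mem_stdSimp, ?_⟩
      rw [facePt_zero, en_SB, vert_succ, hr]
    | succ t =>
      refine ⟨Pi.single t 1, single_mem_stdSimp t, ?_⟩
      rw [facePt_single, en_SB]
      simp only []
      rw [vert_succ, hr]
  -- the directions
  set w : Fin k → Fin k → ℝ := fun i =>
    (fun m => if en J m.succ = en I i then (1:ℝ) else 0) -
    (fun m => if en J m.succ = j then (1:ℝ) else 0) with hw
  have hdir : (fun i => faceDir (SB J) (w i)) =
      fun i => Pi.single (en I i) 1 - Pi.single j 1 := by
    funext i
    rw [hw]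
    simp only []
    rw [faceDir_sub, faceDir_indic J (Finset.mem_insert_of_mem (en_mem I i)),
      faceDir_indic J hjJ]
    abel
  -- evaluate the hypothesis
  have h := hD (SB J) y₀ hy₀ w
  rw [hx, hdir] at h
  -- all terms except I' = I vanish
  rw [Finset.sum_eq_single I (fun I' _ hI' => ?_) (fun h' => absurd (Finset.mem_univ I) h')] at h
  · -- the I-term equals D I (single j)
    have hdet : dxI I (fun i => Pi.single (en I i) 1 - Pi.single j 1) = 1 := by
      rw [dxI_def]
      have h1 : (Matrix.of fun t i => (Pi.single (en I i) 1 - Pi.single j 1 : Fin n → ℝ) (en I t))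
          = (1 : Matrix (Fin k) (Fin k) ℝ) := by
        ext t i
        simp only [Matrix.of_apply, Pi.sub_apply, Matrix.one_apply, Pi.single_apply]
        rw [if_neg (fun hc : en I t = j => hj (hc ▸ en_mem I t))]
        by_cases hti : t = i
        · rw [if_pos (by rw [hti]), if_pos hti]; ring
        · rw [if_neg (fun hc => hti (en_inj I hc)), if_neg hti]; ring
      rw [h1, Matrix.det_one]
    rw [hdet, mul_one] at h
    exact h
  · -- other terms vanish
    by_cases hjI' : j ∈ I'.1
    · rw [vanish_mem hD I' hjI', zero_mul]
    · -- then I' has an element outside J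
      have hns : ¬ I'.1 ⊆ J.1 := by
        intro hsub
        apply hI'
        apply Subtype.ext
        apply Finset.eq_of_subset_of_card_le
        · intro p hp
          rcases Finset.mem_insert.1 (hsub hp) with h1 | h1
          · exact absurd (h1 ▸ hp) hjI'
          · exact h1
        · rw [I.2, I'.2]
      obtain ⟨p, hpI', hpJ⟩ := Finset.not_subset.1 hns
      obtain ⟨t₀, ht₀⟩ := en_surj I' hpI'
      have hdet : dxI I' (fun i => Pi.single (en I i) 1 - Pi.single j 1) = 0 := by
        rw [dxI_def]
        apply Matrix.det_eq_zero_of_row_eq_zero t₀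
        intro m
        simp only [Matrix.of_apply, Pi.sub_apply]
        rw [ht₀, Pi.single_eq_of_ne (fun hc : p = en I m =>
            hpJ (hc ▸ Finset.mem_insert_of_mem (en_mem I m))),
          Pi.single_eq_of_ne (fun hc : p = j => hpJ (hc ▸ hjJ)), sub_zero]
      rw [hdet, mul_zero]

end Vanish

lemma affine_vanish {g : (Fin n → ℝ) → ℝ} (hg : IsAffineFn g) (h0 : g 0 = 0)
    (hp : ∀ p, g (Pi.single p 1) = 0) : ∀ x, g x = 0 := by
  obtain ⟨a, b, hab⟩ := hg
  have hb : b = 0 := by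
    have := hab 0
    simpa [h0] using this.symm
  have ha : ∀ p, a p = 0 := by
    intro p
    have h1 := hab (Pi.single p 1)
    rw [hp p, hb, add_zero] at h1
    have h2 : ∀ i : Fin n, a i * (Pi.single p 1 : Fin n → ℝ) i = if i = p then a i else 0 := by
      intro i
      rw [Pi.single_apply]
      split <;> simp
    rw [Finset.sum_congr rfl fun i _ => h2 i] at h1
    simp [Finset.sum_ite_eq'] at h1
    exact h1.symm
  intro x
  rw [hab x, hb, add_zero, Finset.sum_eq_zero fun i _ => by rw [ha i, zero_mul]]

end WR

/-- `W ∘ R = id` on `Λᵏₑ`: every `k`-form with affine coefficients and constant pullbacks to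
all `k`-faces equals the Whitney form of its de Rham cochain on the standard `n`-simplex. -/
theorem whitney_deRham_id {n k : ℕ} (hk : k ≤ n)
    (f : {s : Finset (Fin n) // s.card = k} → (Fin n → ℝ) → ℝ)
    (hf : ∀ I, IsAffineFn (f I)) (hconst : ConstOnFaces (formEval f)) :
    ∀ x ∈ stdSimp n, ∀ v : Fin k → Fin n → ℝ,
      formEval f x v = whitney (fun S => faceIntegral S (formEval f)) x v := by
  classical
  intro x hx v
  set c : WR.Idx (n+1) (k+1) → ℝ := fun S => faceIntegral S (formEval f) with hc
  have hconst' : ∀ S : WR.Idx (n+1) (k+1), ∃ cst : ℝ,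
      ∀ y ∈ stdSimp k, ∀ w : Fin k → Fin k → ℝ,
        formEval f (facePt S y) (fun i => faceDir S (w i)) =
          cst * Matrix.det (Matrix.of fun i j => w j i) := hconst
  choose cst hcst using hconst'
  have hcS : ∀ S, c S = cst S * (k.factorial : ℝ)⁻¹ :=
    fun S => WR.faceIntegral_const S (cst S) (hcst S)
  have hWpull : ∀ S : WR.Idx (n+1) (k+1), ∀ y ∈ stdSimp k, ∀ w : Fin k → Fin k → ℝ,
      whitney c (facePt S y) (fun i => faceDir S (w i)) =
        cst S * Matrix.det (Matrix.of fun i j => w j i) := by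
    intro S y hy w
    unfold whitney
    rw [Finset.sum_eq_single S (fun T _ hT => by
        rw [WR.whitneyFace_pull_ne S T hT, mul_zero])
      (fun h' => absurd (Finset.mem_univ S) h')]
    rw [WR.whitneyFace_pull_self, hcS S]
    have hfac : (k.factorial : ℝ) ≠ 0 := Nat.cast_ne_zero.2 (Nat.factorial_ne_zero k)
    field_simp
  set D : WR.Idx n k → (Fin n → ℝ) → ℝ := fun I z => f I z - whitney c z (WR.bI I) with hD
  have hDexp : ∀ (z : Fin n → ℝ) (u : Fin k → Fin n → ℝ),
      ∑ I : WR.Idx n k, D I z * dxI I u = formEval f z u - whitney c z u := by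
    intro z u
    rw [WR.whitney_expand c z u]
    unfold formEval
    rw [← Finset.sum_sub_distrib]
    exact Finset.sum_congr rfl fun I _ => by rw [hD]; ring
  have hDpull : ∀ S : WR.Idx (n+1) (k+1), ∀ y ∈ stdSimp k, ∀ w : Fin k → Fin k → ℝ,
      ∑ I : WR.Idx n k, D I (facePt S y) * dxI I (fun i => faceDir S (w i)) = 0 := by
    intro S y hy w
    rw [hDexp, hWpull S y hy w, hcst S y hy w, sub_self]
  have hzero : ∀ I : WR.Idx n k, ∀ z, D I z = 0 := by
    intro I
    apply WR.affine_vanish ((hf I).sub (WR.affine_whitney c (WR.bI I)))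
    · exact WR.vanish_zero hDpull I
    · intro p
      by_cases hp : p ∈ I.1
      · exact WR.vanish_mem hDpull I hp
      · exact WR.vanish_not_mem hDpull I hp
  have hfin := hDexp x v
  rw [Finset.sum_eq_zero (fun I _ => by rw [hzero I x, zero_mul])] at hfin
  linarith [hfin]
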